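/- Let G be a 0-dimensional local Gorenstein K-algebra, J ⊂ G a nonzero ideal with J ⊆ (0 : J), and R = G/J. Then the ideal I = (0 : J)/J of R satisfies I ≅ Hom_K(I, K) as R-modules; that is, I is a symmetric ideal of R. -/
import Mathlib


/-- A 0-dimensional (finite-dimensional) local `K`-algebra `G` is Gorenstein iff
`G ≅ ω_G = Hom_K(G,K)` as `G`-modules, where the `G`-action on the dual is
`(a•ψ)(b) = ψ(a*b)`. -/
def IsGorensteinLocalAlgebra (K G : Type*) [Field K] [CommRing G] [Algebra K G] : Prop :=
  ∃ e : G ≃ₗ[K] (G →ₗ[K] K), ∀ a b c : G, e (a * b) c = e b (a * c)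

set_option maxHeartbeats 1000000 in
/-- Let `G` be a 0-dimensional local Gorenstein `K`-algebra, `J ⊆ G` a nonzero ideal with
`J ⊆ (0 : J)`, and `R = G/J`.  Then the ideal `I = (0 : J)/J` of `R` is symmetric, i.e.
`I ≅ Hom_K(I,K)` as `R`-modules (the `R`-action on the dual being `(a•φ)(x) = φ(a•x)`). -/
theorem stmt2 (K G : Type*) [Field K] [CommRing G] [Algebra K G]
    [IsLocalRing G] [FiniteDimensional K G]
    (hGor : IsGorensteinLocalAlgebra K G)
    (J : Ideal G) (hJne : J ≠ ⊥)
    (hJann : J ≤ (⊥ : Ideal G).colon J) :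
    ∃ e : (((⊥ : Ideal G).colon J).map (Ideal.Quotient.mk J)) ≃ₗ[K]
        ((((⊥ : Ideal G).colon J).map (Ideal.Quotient.mk J)) →ₗ[K] K),
      ∀ (a : G ⧸ J) (x y : (((⊥ : Ideal G).colon J).map (Ideal.Quotient.mk J))),
        e (a • x) y = e x (a • y) := by
  classical
  obtain ⟨e, he⟩ := hGor
  set A : Ideal G := (⊥ : Ideal G).colon J with hAdef
  -- symmetry of the Gorenstein pairing
  have hsymm : ∀ x y : G, e x y = e y x := by
    intro x y
    have h1 : e (x * 1) y = e 1 (x * y) := he x 1 y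
    have h2 : e (y * 1) x = e 1 (y * x) := he y 1 x
    rw [mul_one] at h1 h2
    rw [h1, h2, mul_comm]
  have hA_mul : ∀ x ∈ A, ∀ j ∈ J, x * j = 0 := by
    intro x hx j hj
    have h := Submodule.mem_colon.mp hx j hj
    simpa [smul_eq_mul] using (Submodule.mem_bot G).mp h
  have hBxj : ∀ x ∈ A, ∀ j ∈ J, e x j = 0 := by
    intro x hx j hj
    have h := he j x 1
    rw [mul_one] at h
    have hz : j * x = 0 := by rw [mul_comm]; exact hA_mul x hx j hj
    rw [hz] at h
    simpa using h.symm
  have hJ_of : ∀ x : G, (∀ j ∈ J, e x j = 0) → x ∈ A := by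
    intro x hx
    refine Submodule.mem_colon.mpr fun j hj => ?_
    have h0 : e (x * j) = 0 := by
      ext g
      have h1 : e (x * j) g = e j (x * g) := he x j g
      have h2 : e (g * x) j = e x (g * j) := he g x j
      rw [h1, hsymm j (x * g), mul_comm x g, h2, hx (g * j) (J.mul_mem_left g hj)]
      rfl
    have hxj : x * j = 0 := e.injective (by rw [h0, map_zero])
    simpa [smul_eq_mul, hxj] using (Submodule.mem_bot G).mpr rfl
  -- kernels of restricted duality maps
  have hmemker : ∀ (W : Submodule K G) (x : G),
      x ∈ LinearMap.ker (W.dualRestrict.comp e.toLinearMap) ↔ ∀ w ∈ W, e x w = 0 := by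
    intro W x
    simp only [LinearMap.mem_ker, LinearMap.comp_apply, LinearEquiv.coe_coe]
    rw [LinearMap.ext_iff]
    constructor
    · intro h w hw; simpa [Submodule.dualRestrict_apply] using h ⟨w, hw⟩
    · intro h w; simpa [Submodule.dualRestrict_apply] using h w w.2
  have hdim : ∀ W : Submodule K G,
      Module.finrank K W +
        Module.finrank K (LinearMap.ker (W.dualRestrict.comp e.toLinearMap)) =
        Module.finrank K G := by
    intro W
    have hsurj : Function.Surjective (W.dualRestrict.comp e.toLinearMap) :=
      (Subspace.dualRestrict_surjective).comp e.surjective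
    have h := LinearMap.finrank_range_add_finrank_ker (W.dualRestrict.comp e.toLinearMap)
    rw [LinearMap.range_eq_top.mpr hsurj, finrank_top, Subspace.dual_finrank_eq] at h
    exact h
  set J' := J.restrictScalars K with hJ'def
  set A' := A.restrictScalars K with hA'def
  have hkerJ : LinearMap.ker (J'.dualRestrict.comp e.toLinearMap) = A' := by
    ext x
    rw [hmemker]
    constructor
    · intro h; exact hJ_of x h
    · intro h j hj; exact hBxj x h j hj
  have hJle : J' ≤ LinearMap.ker (A'.dualRestrict.comp e.toLinearMap) := by
    intro j hj
    rw [hmemker]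
    intro w hw
    rw [hsymm]
    exact hBxj w hw j hj
  have hkerA : J' = LinearMap.ker (A'.dualRestrict.comp e.toLinearMap) := by
    have h1 := hdim J'
    have h2 := hdim A'
    rw [hkerJ] at h1
    refine Submodule.eq_of_le_of_finrank_le hJle ?_
    omega
  have keyInj : ∀ x : G, (∀ y ∈ A, e x y = 0) → x ∈ J := by
    intro x hx
    have hm : x ∈ LinearMap.ker (A'.dualRestrict.comp e.toLinearMap) :=
      (hmemker A' x).mpr (fun w hw => hx w hw)
    rw [← hkerA] at hm
    exact hm
  -- the quotient ideal I = A/J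
  have hmksurj : Function.Surjective (Ideal.Quotient.mk J) := Ideal.Quotient.mk_surjective
  set I : Ideal (G ⧸ J) := A.map (Ideal.Quotient.mk J) with hIdef
  have hlift : ∀ x : ↥I, ∃ g : G, g ∈ A ∧ Ideal.Quotient.mk J g = (x : G ⧸ J) := by
    intro x
    obtain ⟨g, hg, hgx⟩ := (Ideal.mem_map_iff_of_surjective _ hmksurj).mp x.2
    exact ⟨g, hg, hgx⟩
  choose lift liftA liftspec using hlift
  have welldef : ∀ x₁ x₂ y : G, y ∈ A → Ideal.Quotient.mk J x₁ = Ideal.Quotient.mk J x₂ →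
      e x₁ y = e x₂ y := by
    intro x₁ x₂ y hy hmk
    have hd : x₁ - x₂ ∈ J := Ideal.Quotient.eq.mp hmk
    have h0 : e (x₁ - x₂) y = 0 := by rw [hsymm]; exact hBxj y hy _ hd
    have h1 : e x₁ y - e x₂ y = 0 := by
      rw [← LinearMap.sub_apply, ← map_sub]; exact h0
    exact sub_eq_zero.mp h1
  have bspec : ∀ (x y : ↥I) (x' y' : G), x' ∈ A → y' ∈ A →
      Ideal.Quotient.mk J x' = (x : G ⧸ J) → Ideal.Quotient.mk J y' = (y : G ⧸ J) →
      e (lift x) (lift y) = e x' y' := by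
    intro x y x' y' hx' hy' hxe hye
    have h1 : e (lift x) (lift y) = e x' (lift y) :=
      welldef _ _ _ (liftA y) ((liftspec x).trans hxe.symm)
    have h2 : e x' (lift y) = e x' y' := by
      rw [hsymm x' (lift y), welldef (lift y) y' x' hx' ((liftspec y).trans hye.symm),
        hsymm y' x']
    exact h1.trans h2
  -- smul facts
  have hmk_smul : ∀ (k : K) (g : G), Ideal.Quotient.mk J (k • g) = k • Ideal.Quotient.mk J g := by
    intro k g
    exact map_smul (Ideal.Quotient.mkₐ K J).toLinearMap k g
  -- the pairing on I
  set b : ↥I → ↥I → K := fun x y => e (lift x) (lift y) with hbdef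
  have b_symm : ∀ x y : ↥I, b x y = b y x := fun x y => hsymm _ _
  have b_add_left : ∀ x z y : ↥I, b (x + z) y = b x y + b z y := by
    intro x z y
    have h : e (lift (x + z)) (lift y) = e (lift x + lift z) (lift y) :=
      bspec (x + z) y _ _ (A.add_mem (liftA x) (liftA z)) (liftA y)
        (by push_cast [map_add, liftspec x, liftspec z]; ring) (liftspec y)
    simp only [hbdef, h, map_add, LinearMap.add_apply]
  have b_smul_left : ∀ (k : K) (x y : ↥I), b (k • x) y = k * b x y := by
    intro k x y
    have h : e (lift (k • x)) (lift y) = e (k • lift x) (lift y) :=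
      bspec (k • x) y _ _ (A.smul_of_tower_mem k (liftA x)) (liftA y)
        (by rw [hmk_smul, liftspec x]; rfl) (liftspec y)
    simp only [hbdef, h, map_smul, LinearMap.smul_apply, smul_eq_mul]
  -- bundle into a linear map
  set Φ : ↥I →ₗ[K] (↥I →ₗ[K] K) :=
    { toFun := fun x =>
        { toFun := fun y => b x y
          map_add' := by
            intro y z
            show b x (y + z) = b x y + b x z
            rw [b_symm x (y + z), b_add_left, b_symm y x, b_symm z x]
          map_smul' := by
            intro k y
            show b x (k • y) = k • b x y
            rw [b_symm x (k • y), b_smul_left, b_symm y x, smul_eq_mul] }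
      map_add' := by
        intro x z
        ext y
        show b (x + z) y = b x y + b z y
        exact b_add_left x z y
      map_smul' := by
        intro k x
        ext y
        show b (k • x) y = k • b x y
        rw [b_smul_left, smul_eq_mul] } with hΦdef
  have hΦapp : ∀ x y : ↥I, Φ x y = e (lift x) (lift y) := fun x y => rfl
  -- injectivity
  have hker : ∀ x : ↥I, Φ x = 0 → x = 0 := by
    intro x hx
    have hxA : ∀ y ∈ A, e (lift x) y = 0 := by
      intro y hy
      have hyI : Ideal.Quotient.mk J y ∈ I := Ideal.mem_map_of_mem _ hy
      have h0 : Φ x ⟨Ideal.Quotient.mk J y, hyI⟩ = 0 := by rw [hx]; rfl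
      have h1 : e (lift x) (lift ⟨Ideal.Quotient.mk J y, hyI⟩) = e (lift x) y :=
        bspec x _ (lift x) y (liftA x) hy (liftspec x) rfl
      rw [hΦapp] at h0
      rw [← h1]
      exact h0
    have hxJ : lift x ∈ J := keyInj _ hxA
    have hx0 : (x : G ⧸ J) = 0 := by
      rw [← liftspec x, Ideal.Quotient.eq_zero_iff_mem]
      exact hxJ
    exact Subtype.ext hx0
  have hinj : Function.Injective Φ := by
    intro u v h
    have h0 : u - v = 0 := hker _ (by rw [map_sub, h, sub_self])
    exact sub_eq_zero.mp h0
  -- finite dimensionality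
  have hfdQ : FiniteDimensional K (G ⧸ J) :=
    Module.Finite.of_surjective ((Submodule.mkQ (J : Submodule G G)).restrictScalars K)
      (Submodule.Quotient.mk_surjective _)
  have hfdI : FiniteDimensional K ↥I :=
    FiniteDimensional.of_injective ((I.subtype).restrictScalars K) Subtype.val_injective
  have hfr : Module.finrank K ↥I = Module.finrank K (↥I →ₗ[K] K) :=
    (Subspace.dual_finrank_eq (V := ↥I)).symm
  refine ⟨Φ.linearEquivOfInjective hinj hfr, ?_⟩
  intro a x y
  rw [LinearMap.linearEquivOfInjective_apply, LinearMap.linearEquivOfInjective_apply]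
  obtain ⟨g, rfl⟩ := hmksurj a
  rw [hΦapp, hΦapp]
  have hax : e (lift (Ideal.Quotient.mk J g • x)) (lift y) = e (g * lift x) (lift y) :=
    bspec _ y _ _ (A.mul_mem_left g (liftA x)) (liftA y)
      (by rw [map_mul, liftspec x, ← smul_eq_mul, ← Submodule.coe_smul]) (liftspec y)
  have hay : e (lift x) (lift (Ideal.Quotient.mk J g • y)) = e (lift x) (g * lift y) := by
    rw [hsymm (lift x) (lift (Ideal.Quotient.mk J g • y)),
      bspec _ x _ _ (A.mul_mem_left g (liftA y)) (liftA x)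
        (by rw [map_mul, liftspec y, ← smul_eq_mul, ← Submodule.coe_smul]) (liftspec x),
      hsymm]
  rw [hax, hay, he g (lift x) (lift y)]
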